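/- Let F be a field, let m, k be positive integers, let A ∈ F^{m×k}, and let R₁ ⊇ R₂ ⊇ ⋯ ⊇ R_k be subsets of {1,…,m}. Call B ∈ F^{m×k} a completion of A if B_{i,j} = A_{i,j} for every j ∈ {1,…,k} and every i ∈ R_j. Then the minimum of rank(B) over all completions B equals the number of indices j ∈ {1,…,k} for which the restricted column (A_{i,j})_{i ∈ R_j} is not contained in the span of the restricted earlier columns {(A_{i,j'})_{i ∈ R_j} : 1 ≤ j' < j}. -/

import Mathlib

open Matrix Finset
open scoped Classical

section Aux

variable {F : Type} [Field F] {m k : ℕ}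

private lemma stmt15_lower (A B : Matrix (Fin m) (Fin k) F) (R : Fin k → Finset (Fin m))
    (hR : ∀ j j' : Fin k, j ≤ j' → R j' ⊆ R j)
    (hB : ∀ j : Fin k, ∀ i ∈ R j, B i j = A i j)
    (J : Finset (Fin k))
    (hJ : ∀ j ∈ J, (fun i : {x // x ∈ R j} => A i.1 j) ∉
          Submodule.span F ((fun j' : Fin k => (fun i : {x // x ∈ R j} => A i.1 j')) ''
            {j' : Fin k | j' < j})) :
    J.card ≤ B.rank := by
  classical
  have li : LinearIndependent F (fun j : {x // x ∈ J} => (fun i => B i j.1)) := by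
    rw [Fintype.linearIndependent_iff]
    intro c hc
    by_contra hne
    push_neg at hne
    obtain ⟨j0, hj0⟩ := hne
    set s : Finset {x // x ∈ J} := Finset.univ.filter fun j => c j ≠ 0 with hs
    have hsne : s.Nonempty := ⟨j0, by simp [hs, hj0]⟩
    set jm := s.max' hsne with hjm
    have hjms : jm ∈ s := s.max'_mem hsne
    have hcjm : c jm ≠ 0 := by simpa [hs] using hjms
    have key : ∀ i ∈ R jm.1, ∑ j ∈ s, c j * A i j.1 = 0 := by
      intro i hi
      have h1 : ∑ j : {x // x ∈ J}, c j * B i j.1 = 0 := by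
        have := congrFun hc i
        simpa using this
      have h2 : ∑ j ∈ s, c j * B i j.1 = 0 := by
        rw [← h1]
        apply Finset.sum_subset (Finset.subset_univ s)
        intro j _ hjs
        have : c j = 0 := by simpa [hs] using hjs
        simp [this]
      rw [← h2]
      apply Finset.sum_congr rfl
      intro j hjs
      have hle : j ≤ jm := s.le_max' j hjs
      have hiR : i ∈ R j.1 := hR j.1 jm.1 hle hi
      rw [hB j.1 i hiR]
    apply hJ jm.1 jm.2
    have hv : (fun i : {x // x ∈ R jm.1} => A i.1 jm.1)
        = (c jm)⁻¹ • ∑ j ∈ s.erase jm, (-(c j)) • (fun i : {x // x ∈ R jm.1} => A i.1 j.1) := by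
      funext i
      have hk := key i.1 i.2
      rw [← Finset.add_sum_erase _ _ hjms] at hk
      have h2 : ∑ j ∈ s.erase jm, c j * A i.1 j.1 = -(c jm * A i.1 jm.1) := by
        linear_combination hk
      simp only [Pi.smul_apply, Finset.sum_apply, smul_eq_mul, neg_mul]
      rw [Finset.sum_neg_distrib, h2, neg_neg, inv_mul_cancel_left₀ hcjm]
    rw [hv]
    apply Submodule.smul_mem
    apply Submodule.sum_mem
    intro j hj
    apply Submodule.smul_mem
    apply Submodule.subset_span
    refine ⟨j.1, ?_, rfl⟩
    have hle : j ≤ jm := s.le_max' j (Finset.mem_of_mem_erase hj)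
    have hne : j ≠ jm := Finset.ne_of_mem_erase hj
    exact lt_of_le_of_ne (by exact_mod_cast hle) (fun h => hne (Subtype.ext h))
  have hmemrange : ∀ j : {x // x ∈ J}, (fun i => B i j.1) ∈ LinearMap.range B.mulVecLin := by
    intro j
    exact ⟨Pi.single j.1 1, by funext i; simp⟩
  have liv : LinearIndependent F (fun j : {x // x ∈ J} =>
      (⟨(fun i => B i j.1), hmemrange j⟩ : LinearMap.range B.mulVecLin)) :=
    LinearIndependent.of_comp (LinearMap.range B.mulVecLin).subtype li
  have hcard := liv.fintype_card_le_finrank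
  simpa [Matrix.rank] using hcard

private lemma stmt15_upper (A : Matrix (Fin m) (Fin k) F) (R : Fin k → Finset (Fin m))
    (hR : ∀ j j' : Fin k, j ≤ j' → R j' ⊆ R j)
    (J : Set (Fin k))
    (hJ : ∀ j : Fin k, j ∉ J → (fun i : {x // x ∈ R j} => A i.1 j) ∈
          Submodule.span F ((fun j' : Fin k => (fun i : {x // x ∈ R j} => A i.1 j')) ''
            {j' : Fin k | j' < j})) :
    ∀ n : ℕ, n ≤ k → ∃ B : Matrix (Fin m) (Fin k) F,
      (∀ j : Fin k, (j : ℕ) < n → ∀ i ∈ R j, B i j = A i j) ∧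
      (∀ j : Fin k, (fun i => B i j) ∈
        Submodule.span F ((fun j' : Fin k => (fun i => B i j')) ''
          {j' : Fin k | j' ∈ J ∧ (j' : ℕ) < n})) := by
  intro n
  induction n with
  | zero =>
    intro _
    refine ⟨0, by simp, ?_⟩
    intro j
    exact Submodule.zero_mem _
  | succ n ih =>
    intro hn1
    obtain ⟨B, hB1, hB3⟩ := ih (Nat.le_of_succ_le hn1)
    set jn : Fin k := ⟨n, hn1⟩ with hjn
    by_cases hJn : jn ∈ J
    · refine ⟨fun i j => if j = jn then (if i ∈ R jn then A i jn else 0) else B i j, ?_, ?_⟩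
      · intro j hj i hi
        by_cases hjeq : j = jn
        · subst hjeq
          simp [hi]
        · have hjlt : (j : ℕ) < n := by
            have hne : (j : ℕ) ≠ n := fun h => hjeq (Fin.ext (by simp [hjn, h]))
            omega
          simp only [if_neg hjeq]
          exact hB1 j hjlt i hi
      · intro j
        by_cases hjeq : j = jn
        · subst hjeq
          apply Submodule.subset_span
          exact ⟨jn, ⟨hJn, Nat.lt_succ_self n⟩, rfl⟩
        · have hcol : (fun i => if j = jn then (if i ∈ R jn then A i jn else 0) else B i j)
              = fun i => B i j := by funext i; simp [hjeq]
          rw [hcol]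
          have hsub : ((fun j' : Fin k => (fun i => B i j')) '' {j' : Fin k | j' ∈ J ∧ (j' : ℕ) < n})
              ⊆ ((fun j' : Fin k => (fun i =>
                  if j' = jn then (if i ∈ R jn then A i jn else 0) else B i j')) ''
                {j' : Fin k | j' ∈ J ∧ (j' : ℕ) < n + 1}) := by
            rintro x ⟨j', ⟨hj'J, hj'lt⟩, rfl⟩
            have hj'ne : j' ≠ jn := fun h => Nat.ne_of_lt hj'lt (by rw [h])
            exact ⟨j', ⟨hj'J, Nat.lt_succ_of_lt hj'lt⟩, by funext i; simp [hj'ne]⟩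
          exact Submodule.span_mono hsub (hB3 j)
    · have hv := hJ jn hJn
      rw [Set.image_eq_range] at hv
      obtain ⟨c, hc⟩ := (Submodule.mem_span_range_iff_exists_fun F).mp hv
      refine ⟨fun i j => if j = jn then ∑ x : {j' : Fin k | j' < jn}, c x * B i x.1 else B i j,
        ?_, ?_⟩
      · intro j hj i hi
        by_cases hjeq : j = jn
        · subst hjeq
          simp only [if_pos rfl]
          have hsum : ∀ x : {j' : Fin k | j' < jn}, B i x.1 = A i x.1 := by
            intro x
            have hxlt : (x.1 : ℕ) < n := x.2
            have hiR : i ∈ R x.1 := hR x.1 jn (le_of_lt x.2) hi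
            exact hB1 x.1 hxlt i hiR
          calc ∑ x : {j' : Fin k | j' < jn}, c x * B i x.1
              = ∑ x : {j' : Fin k | j' < jn}, c x * A i x.1 := by
                apply Finset.sum_congr rfl; intro x _; rw [hsum x]
            _ = A i jn := by
                have h := congrFun hc ⟨i, hi⟩
                simpa using h
        · have hjlt : (j : ℕ) < n := by
            have hne : (j : ℕ) ≠ n := fun h => hjeq (Fin.ext (by simp [hjn, h]))
            omega
          simp only [if_neg hjeq]
          exact hB1 j hjlt i hi
      · have hsetS : ({j' : Fin k | j' ∈ J ∧ (j' : ℕ) < n + 1} : Set (Fin k))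
            = {j' : Fin k | j' ∈ J ∧ (j' : ℕ) < n} := by
          ext j'
          simp only [Set.mem_setOf_eq, and_congr_right_iff]
          intro hj'J
          have hne : (j' : ℕ) ≠ n := by
            intro h
            exact hJn (by rwa [show jn = j' from Fin.ext (by simp [hjn, h])])
          omega
        have himg : ((fun j' : Fin k => (fun i =>
              if j' = jn then ∑ x : {j'' : Fin k | j'' < jn}, c x * B i x.1 else B i j')) ''
              {j' : Fin k | j' ∈ J ∧ (j' : ℕ) < n + 1})
            = ((fun j' : Fin k => (fun i => B i j')) '' {j' : Fin k | j' ∈ J ∧ (j' : ℕ) < n}) := by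
          rw [hsetS]
          apply Set.image_congr
          intro j' hj'
          have hj'ne : j' ≠ jn := fun h => Nat.ne_of_lt hj'.2 (by rw [h])
          funext i; simp [hj'ne]
        intro j
        rw [himg]
        by_cases hjeq : j = jn
        · subst hjeq
          have hcol : (fun i => if jn = jn then
                ∑ x : {j'' : Fin k | j'' < jn}, c x * B i x.1 else B i jn)
              = ∑ x : {j'' : Fin k | j'' < jn}, c x • (fun i => B i x.1) := by
            funext i
            simp [Finset.sum_apply]
          rw [hcol]
          apply Submodule.sum_mem
          intro x _
          exact Submodule.smul_mem _ _ (hB3 x.1)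
        · have hcol : (fun i => if j = jn then
                ∑ x : {j'' : Fin k | j'' < jn}, c x * B i x.1 else B i j)
              = fun i => B i j := by funext i; simp [hjeq]
          rw [hcol]
          exact hB3 j

end Aux

/-- Minimum-rank completion for a staircase observation pattern: with nested observed row sets
`R₁ ⊇ R₂ ⊇ ⋯ ⊇ R_k`, the minimum rank of a matrix agreeing with `A` on the observed entries
equals the number of columns `j` whose observed part is not in the span of the observed parts
of the earlier columns. -/
theorem stmt15 {F : Type} [Field F] {m k : ℕ} (hm : 0 < m) (hk : 0 < k)
    (A : Matrix (Fin m) (Fin k) F) (R : Fin k → Finset (Fin m))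
    (hR : ∀ j j' : Fin k, j ≤ j' → R j' ⊆ R j) :
    sInf {r : ℕ | ∃ B : Matrix (Fin m) (Fin k) F,
        (∀ j : Fin k, ∀ i ∈ R j, B i j = A i j) ∧ B.rank = r}
      = (Finset.univ.filter fun j : Fin k =>
          (fun i : {x // x ∈ R j} => A i.1 j) ∉
            Submodule.span F
              ((fun j' : Fin k => (fun i : {x // x ∈ R j} => A i.1 j')) ''
                {j' : Fin k | j' < j})).card := by
  classical
  set S := {r : ℕ | ∃ B : Matrix (Fin m) (Fin k) F,
      (∀ j : Fin k, ∀ i ∈ R j, B i j = A i j) ∧ B.rank = r} with hS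
  set J := Finset.univ.filter fun j : Fin k =>
      (fun i : {x // x ∈ R j} => A i.1 j) ∉
        Submodule.span F
          ((fun j' : Fin k => (fun i : {x // x ∈ R j} => A i.1 j')) ''
            {j' : Fin k | j' < j}) with hJdef
  have hJmem : ∀ j ∈ J, (fun i : {x // x ∈ R j} => A i.1 j) ∉
      Submodule.span F ((fun j' : Fin k => (fun i : {x // x ∈ R j} => A i.1 j')) ''
        {j' : Fin k | j' < j}) := by
    intro j hj
    exact (Finset.mem_filter.mp hj).2
  have hlow : ∀ r ∈ S, J.card ≤ r := by
    rintro r ⟨B, hB, rfl⟩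
    exact stmt15_lower A B R hR hB J hJmem
  have hmem : J.card ∈ S := by
    obtain ⟨B, hB1, hB3⟩ := stmt15_upper A R hR (↑J : Set (Fin k))
      (fun j hj => by
        by_contra hcon
        exact hj (by simp [hJdef, hcon]))
      k (le_refl k)
    have hcomp : ∀ j : Fin k, ∀ i ∈ R j, B i j = A i j := fun j i hi => hB1 j j.isLt i hi
    refine ⟨B, hcomp, ?_⟩
    have hset : ({j' : Fin k | j' ∈ (↑J : Set (Fin k)) ∧ (j' : ℕ) < k} : Set (Fin k))
        = (↑J : Set (Fin k)) := by
      ext j'; simp [j'.isLt]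
    have hle : B.rank ≤ J.card := by
      rw [Matrix.rank_eq_finrank_span_cols]
      have hspan : Submodule.span F (Set.range Bᵀ)
          ≤ Submodule.span F ((fun j' : Fin k => (fun i => B i j')) '' (↑J : Set (Fin k))) := by
        rw [Submodule.span_le]
        rintro x ⟨j, rfl⟩
        have := hB3 j
        rw [hset] at this
        exact this
      have h1 : Module.finrank F (Submodule.span F (Set.range Bᵀ))
          ≤ Module.finrank F (Submodule.span F
            ((fun j' : Fin k => (fun i => B i j')) '' (↑J : Set (Fin k)))) :=
        Submodule.finrank_mono hspan
      have h2 : ((fun j' : Fin k => (fun i => B i j')) '' (↑J : Set (Fin k)))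
          = ↑(J.image (fun j' : Fin k => (fun i => B i j'))) := by
        rw [Finset.coe_image]
      have h3 : Module.finrank F (Submodule.span F
            ((fun j' : Fin k => (fun i => B i j')) '' (↑J : Set (Fin k))))
          ≤ (J.image (fun j' : Fin k => (fun i => B i j'))).card := by
        rw [h2]
        exact finrank_span_finset_le_card _
      exact h1.trans (h3.trans (Finset.card_image_le))
    have hge : J.card ≤ B.rank := stmt15_lower A B R hR hcomp J hJmem
    omega
  exact le_antisymm (Nat.sInf_le hmem) (le_csInf ⟨J.card, hmem⟩ hlow)
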